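/- The image under the quotient map p of the punctured coordinate plane {(0, x₂, x₃) : (x₂, x₃) ≠ (0, 0)} ⊆ ℝ³ ∖ {0}, with its subspace topology in V, is homeomorphic to the 2-torus (ℝ/ℤ) × (ℝ/ℤ). (This image is the trivial torus λ̂₀ embedded in V ≅ S² × S¹.) -/

import Mathlib

/-- Punctured Euclidean 3-space `ℝ³ ∖ {0}`. -/
abbrev PuncturedR3 : Type := {x : EuclideanSpace ℝ (Fin 3) // x ≠ 0}

/-- The ℤ-action `n • x = 2⁻ⁿ x` on `ℝ³ ∖ {0}` (iterates of the homothety `x ↦ x/2`). -/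
noncomputable def homothetyAct (n : ℤ) (x : PuncturedR3) : PuncturedR3 :=
  ⟨(2 : ℝ) ^ (-n) • (x : EuclideanSpace ℝ (Fin 3)),
    smul_ne_zero (zpow_ne_zero _ two_ne_zero) x.2⟩

/-- The orbit relation of the action; the orbit space `V` is `Quot homothetyRel`. -/
def homothetyRel (x y : PuncturedR3) : Prop := ∃ n : ℤ, homothetyAct n x = y

/-- The punctured coordinate plane `{(0, x₂, x₃) : (x₂, x₃) ≠ (0,0)} ⊆ ℝ³ ∖ {0}`
(the condition `(x₂, x₃) ≠ (0,0)` is automatic since points of `PuncturedR3` are nonzero). -/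
def puncturedPlane : Set PuncturedR3 :=
  {x : PuncturedR3 | (x : EuclideanSpace ℝ (Fin 3)) 0 = 0}

open Real

noncomputable section AuxTorus

instance : Fact ((0:ℝ) < 1) := ⟨one_pos⟩

lemma homothetyAct_val (n : ℤ) (x : PuncturedR3) :
    (homothetyAct n x : EuclideanSpace ℝ (Fin 3)) = (2:ℝ) ^ (-n) • (x : EuclideanSpace ℝ (Fin 3)) := rfl

lemma homothetyRel_equiv : Equivalence homothetyRel := by
  constructor
  · intro x
    exact ⟨0, by simp [homothetyAct, Subtype.ext_iff]⟩
  · rintro x y ⟨n, rfl⟩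
    refine ⟨-n, ?_⟩
    simp only [homothetyAct, Subtype.ext_iff, smul_smul, ← zpow_add₀ (two_ne_zero (α := ℝ))]
    simp
  · rintro x y z ⟨n, rfl⟩ ⟨m, rfl⟩
    refine ⟨n + m, ?_⟩
    simp only [homothetyAct, Subtype.ext_iff, smul_smul, ← zpow_add₀ (two_ne_zero (α := ℝ))]
    ring_nf

/-- The invariant map to (direction, log₂-norm mod 1). -/
def Phi (x : PuncturedR3) : EuclideanSpace ℝ (Fin 3) × AddCircle (1:ℝ) :=
  (‖(x : EuclideanSpace ℝ (Fin 3))‖⁻¹ • (x : EuclideanSpace ℝ (Fin 3)),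
    (logb 2 ‖(x : EuclideanSpace ℝ (Fin 3))‖ : ℝ))

lemma norm_act (n : ℤ) (x : PuncturedR3) :
    ‖(homothetyAct n x : EuclideanSpace ℝ (Fin 3))‖
      = (2:ℝ) ^ (-n) * ‖(x : EuclideanSpace ℝ (Fin 3))‖ := by
  rw [homothetyAct_val, norm_smul, Real.norm_eq_abs, abs_of_pos (zpow_pos two_pos _)]

lemma Phi_invariant (n : ℤ) (x : PuncturedR3) : Phi (homothetyAct n x) = Phi x := by
  have hx : ‖(x : EuclideanSpace ℝ (Fin 3))‖ ≠ 0 := norm_ne_zero_iff.mpr x.2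
  have hc : ((2:ℝ) ^ (-n)) ≠ 0 := zpow_ne_zero _ two_ne_zero
  unfold Phi
  rw [Prod.ext_iff]
  constructor
  · have key : (((2:ℝ) ^ (-n))⁻¹ * ‖(x : EuclideanSpace ℝ (Fin 3))‖⁻¹) * (2:ℝ) ^ (-n)
        = ‖(x : EuclideanSpace ℝ (Fin 3))‖⁻¹ := by
      field_simp
    rw [norm_act, homothetyAct_val, smul_smul, mul_inv, key]
  · simp only [norm_act]
    rw [Real.logb_mul hc hx, show ((2:ℝ) ^ (-n)) = (2:ℝ) ^ ((-n : ℤ) : ℝ) by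
      rw [Real.rpow_intCast], Real.logb_rpow (by norm_num) (by norm_num)]
    rw [QuotientAddGroup.mk_add]
    have h0 : (((-n : ℤ) : ℝ) : AddCircle (1:ℝ)) = 0 := by
      rw [QuotientAddGroup.eq_zero_iff]
      exact ⟨-n, by simp⟩
    rw [h0, zero_add]

def PhiHat : Quot homothetyRel → EuclideanSpace ℝ (Fin 3) × AddCircle (1:ℝ) :=
  Quot.lift Phi (by rintro x y ⟨n, rfl⟩; exact (Phi_invariant n x).symm)

lemma continuous_Phi : Continuous Phi := by
  have hnorm : Continuous fun x : PuncturedR3 => ‖(x : EuclideanSpace ℝ (Fin 3))‖ :=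
    continuous_subtype_val.norm
  have hne : ∀ x : PuncturedR3, ‖(x : EuclideanSpace ℝ (Fin 3))‖ ≠ 0 :=
    fun x => norm_ne_zero_iff.mpr x.2
  refine Continuous.prodMk ?_ ?_
  · exact (hnorm.inv₀ hne).smul continuous_subtype_val
  · refine Continuous.comp continuous_quotient_mk' ?_
    have : Continuous fun x : PuncturedR3 => Real.log ‖(x : EuclideanSpace ℝ (Fin 3))‖ :=
      hnorm.log hne
    exact this.div_const _

lemma continuous_PhiHat : Continuous PhiHat :=
  continuous_quot_lift _ continuous_Phi

lemma injective_PhiHat : Function.Injective PhiHat := by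
  intro q q'
  refine Quot.induction_on₂ q q' fun x y h => ?_
  have hx : (0:ℝ) < ‖(x : EuclideanSpace ℝ (Fin 3))‖ := norm_pos_iff.mpr x.2
  have hy : (0:ℝ) < ‖(y : EuclideanSpace ℝ (Fin 3))‖ := norm_pos_iff.mpr y.2
  have h1 := congrArg Prod.fst h
  have h2 := congrArg Prod.snd h
  simp only [PhiHat, Phi] at h1 h2
  -- from h2 : logb coincide mod ℤ
  rw [QuotientAddGroup.eq] at h2
  obtain ⟨m, hm⟩ := h2
  simp only [zsmul_eq_mul, mul_one] at hm
  have hmm : Real.logb 2 ‖(y : EuclideanSpace ℝ (Fin 3))‖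
      = Real.logb 2 ‖(x : EuclideanSpace ℝ (Fin 3))‖ + (m : ℝ) := by linarith
  have h2x := Real.rpow_logb (b := 2) two_pos (by norm_num) hx
  have h2y := Real.rpow_logb (b := 2) two_pos (by norm_num) hy
  have hnorm : ‖(y : EuclideanSpace ℝ (Fin 3))‖
      = (2:ℝ) ^ (m:ℤ) * ‖(x : EuclideanSpace ℝ (Fin 3))‖ := by
    rw [← h2y, hmm, Real.rpow_add two_pos, h2x, Real.rpow_intCast, mul_comm]
  have key : homothetyAct (-m) x = y := by
    apply Subtype.ext
    rw [homothetyAct_val, neg_neg]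
    have e1 : (y : EuclideanSpace ℝ (Fin 3))
        = ‖(y : EuclideanSpace ℝ (Fin 3))‖ • (‖(y : EuclideanSpace ℝ (Fin 3))‖⁻¹ • (y : EuclideanSpace ℝ (Fin 3))) := by
      rw [smul_smul, mul_inv_cancel₀ hy.ne', one_smul]
    rw [e1, ← h1, smul_smul, hnorm]
    congr 1
    field_simp
  exact Quot.sound ⟨-m, key⟩

instance : T2Space (Quot homothetyRel) :=
  T2Space.of_injective_continuous injective_PhiHat continuous_PhiHat

/-- The parametrization of the punctured plane by polar coordinates. -/
def planePt (s t : ℝ) : EuclideanSpace ℝ (Fin 3) :=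
  WithLp.toLp 2 ![0, (2:ℝ) ^ t * Real.cos (2 * π * s), (2:ℝ) ^ t * Real.sin (2 * π * s)]

lemma planePt_ne_zero (s t : ℝ) : planePt s t ≠ 0 := by
  intro h
  have h1 := congrFun (congrArg WithLp.ofLp h) 1
  have h2 := congrFun (congrArg WithLp.ofLp h) 2
  have hz1 : (0 : EuclideanSpace ℝ (Fin 3)) 1 = 0 := rfl
  have hz2 : (0 : EuclideanSpace ℝ (Fin 3)) 2 = 0 := rfl
  rw [hz1] at h1
  rw [hz2] at h2
  simp only [planePt, Matrix.cons_val_one, Matrix.head_cons] at h1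
  simp only [planePt, Matrix.cons_val_two, Matrix.tail_cons, Matrix.head_cons] at h2
  have hp : ((2:ℝ) ^ t) ≠ 0 := (Real.rpow_pos_of_pos two_pos t).ne'
  have hc : Real.cos (2 * π * s) = 0 := (mul_eq_zero.mp h1).resolve_left hp
  have hs : Real.sin (2 * π * s) = 0 := (mul_eq_zero.mp h2).resolve_left hp
  have := Real.sin_sq_add_cos_sq (2 * π * s)
  rw [hs, hc] at this
  norm_num at this

def planePtX (s t : ℝ) : PuncturedR3 := ⟨planePt s t, planePt_ne_zero s t⟩

lemma planePt_shift (s t : ℝ) (m k : ℤ) :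
    planePtX (s + m) (t + k) = homothetyAct (-k) (planePtX s t) := by
  apply Subtype.ext
  rw [homothetyAct_val, neg_neg]
  have hc : Real.cos (2 * π * (s + m)) = Real.cos (2 * π * s) := by
    rw [show 2 * π * (s + m) = 2 * π * s + m * (2 * π) by ring, Real.cos_add_int_mul_two_pi]
  have hs : Real.sin (2 * π * (s + m)) = Real.sin (2 * π * s) := by
    rw [show 2 * π * (s + m) = 2 * π * s + m * (2 * π) by ring, Real.sin_add_int_mul_two_pi]
  have hpow : (2:ℝ) ^ (t + (k:ℝ)) = (2:ℝ) ^ (k:ℤ) * (2:ℝ) ^ t := by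
    rw [Real.rpow_add two_pos, ← Real.rpow_intCast 2 k, mul_comm]
  ext i
  fin_cases i <;>
    simp [planePtX, planePt, hc, hs, hpow, PiLp.smul_apply, smul_eq_mul] <;> ring

/-- Parametrization `ℝ² → V`. -/
def bigF (st : ℝ × ℝ) : Quot homothetyRel := Quot.mk homothetyRel (planePtX st.1 st.2)

lemma bigF_shift (s t : ℝ) (m k : ℤ) : bigF (s + m, t + k) = bigF (s, t) := by
  unfold bigF
  simp only
  rw [show ((t:ℝ) + (k:ℝ)) = t + (k:ℤ) by norm_num]
  rw [planePt_shift]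
  exact (Quot.sound ⟨-k, rfl⟩).symm

/-- The torus parametrization of the image. -/
def torusParam (ab : AddCircle (1:ℝ) × AddCircle (1:ℝ)) : Quot homothetyRel :=
  Quotient.liftOn₂' ab.1 ab.2 (fun s t => bigF (s, t)) (by
    intro s t s' t' hs ht
    rw [QuotientAddGroup.leftRel_apply] at hs ht
    obtain ⟨m, hm⟩ := hs
    obtain ⟨k, hk⟩ := ht
    simp only [zsmul_eq_mul, mul_one] at hm hk
    have hs' : s' = s + m := by linarith [hm]
    have ht' : t' = t + k := by linarith [hk]
    rw [hs', ht']
    exact (bigF_shift s t m k).symm)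

lemma torusParam_mk (s t : ℝ) : torusParam ((s : AddCircle (1:ℝ)), (t : AddCircle (1:ℝ))) = bigF (s, t) := rfl

lemma continuous_bigF : Continuous bigF := by
  have h2t : Continuous fun st : ℝ × ℝ => (2:ℝ) ^ st.2 := by
    refine continuous_iff_continuousAt.2 fun st => ?_
    exact (Real.continuousAt_const_rpow two_ne_zero).comp continuousAt_snd
  have hvec : Continuous fun st : ℝ × ℝ =>
      (![0, (2:ℝ) ^ st.2 * Real.cos (2 * π * st.1), (2:ℝ) ^ st.2 * Real.sin (2 * π * st.1)]
        : Fin 3 → ℝ) := by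
    refine continuous_pi fun i => ?_
    fin_cases i
    · exact continuous_const
    · exact h2t.mul (Real.continuous_cos.comp (continuous_const.mul continuous_fst))
    · exact h2t.mul (Real.continuous_sin.comp (continuous_const.mul continuous_fst))
  have hplane : Continuous fun st : ℝ × ℝ => planePt st.1 st.2 :=
    (PiLp.continuous_toLp 2 fun _ : Fin 3 => ℝ).comp hvec
  exact continuous_quot_mk.comp (hplane.subtype_mk _)

lemma continuous_torusParam : Continuous torusParam := by
  have hq : IsOpenQuotientMap (Prod.map (QuotientAddGroup.mk : ℝ → AddCircle (1:ℝ))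
      (QuotientAddGroup.mk : ℝ → AddCircle (1:ℝ))) :=
    QuotientAddGroup.isOpenQuotientMap_mk.prodMap QuotientAddGroup.isOpenQuotientMap_mk
  rw [hq.isQuotientMap.continuous_iff]
  exact continuous_bigF

lemma torusParam_mem (ab : AddCircle (1:ℝ) × AddCircle (1:ℝ)) :
    torusParam ab ∈ Quot.mk homothetyRel '' puncturedPlane := by
  obtain ⟨a, b⟩ := ab
  obtain ⟨s, rfl⟩ := QuotientAddGroup.mk_surjective a
  obtain ⟨t, rfl⟩ := QuotientAddGroup.mk_surjective b
  rw [torusParam_mk]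
  exact ⟨planePtX s t, by simp [puncturedPlane, planePtX, planePt], rfl⟩

lemma two_pi_ne_zero : (2 * π : ℝ) ≠ 0 := by positivity

lemma torusParam_inj_aux {s t s' t' : ℝ} (h : bigF (s, t) = bigF (s', t')) :
    ((s : AddCircle (1:ℝ)) = s') ∧ ((t : AddCircle (1:ℝ)) = t') := by
  have hrel : homothetyRel (planePtX s t) (planePtX s' t') :=
    (homothetyRel_equiv.eqvGen_iff).mp (Quot.eq.mp h)
  obtain ⟨n, hn⟩ := hrel
  have hval := congrArg Subtype.val hn
  rw [homothetyAct_val] at hval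
  have h1 := congrFun (congrArg WithLp.ofLp hval) 1
  have h2 := congrFun (congrArg WithLp.ofLp hval) 2
  simp only [planePtX, planePt, PiLp.smul_apply, smul_eq_mul, Matrix.cons_val_one,
    Matrix.head_cons, Matrix.cons_val_zero, Matrix.cons_val_two, Matrix.tail_cons] at h1 h2
  have hc2 : ((2:ℝ) ^ (-n : ℤ)) * (2:ℝ) ^ t = (2:ℝ) ^ (t - (n:ℝ)) := by
    rw [← Real.rpow_intCast 2 (-n), ← Real.rpow_add two_pos]
    norm_num
    ring_nf
  have e1 : (2:ℝ) ^ (t - (n:ℝ)) * Real.cos (2 * π * s) = (2:ℝ) ^ t' * Real.cos (2 * π * s') := by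
    rw [← hc2]; linarith [h1]
  have e2 : (2:ℝ) ^ (t - (n:ℝ)) * Real.sin (2 * π * s) = (2:ℝ) ^ t' * Real.sin (2 * π * s') := by
    rw [← hc2]; linarith [h2]
  have hu : (0:ℝ) < (2:ℝ) ^ (t - (n:ℝ)) := Real.rpow_pos_of_pos two_pos _
  have hu' : (0:ℝ) < (2:ℝ) ^ t' := Real.rpow_pos_of_pos two_pos _
  have l1 : ((2:ℝ) ^ (t - (n:ℝ)) * Real.cos (2 * π * s))^2
      + ((2:ℝ) ^ (t - (n:ℝ)) * Real.sin (2 * π * s))^2 = ((2:ℝ) ^ (t - (n:ℝ)))^2 := by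
    calc ((2:ℝ) ^ (t - (n:ℝ)) * Real.cos (2 * π * s))^2
        + ((2:ℝ) ^ (t - (n:ℝ)) * Real.sin (2 * π * s))^2
        = ((2:ℝ) ^ (t - (n:ℝ)))^2 * (Real.sin (2 * π * s)^2 + Real.cos (2 * π * s)^2) := by ring
      _ = ((2:ℝ) ^ (t - (n:ℝ)))^2 := by rw [Real.sin_sq_add_cos_sq, mul_one]
  have l2 : ((2:ℝ) ^ t' * Real.cos (2 * π * s'))^2
      + ((2:ℝ) ^ t' * Real.sin (2 * π * s'))^2 = ((2:ℝ) ^ t')^2 := by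
    calc ((2:ℝ) ^ t' * Real.cos (2 * π * s'))^2 + ((2:ℝ) ^ t' * Real.sin (2 * π * s'))^2
        = ((2:ℝ) ^ t')^2 * (Real.sin (2 * π * s')^2 + Real.cos (2 * π * s')^2) := by ring
      _ = ((2:ℝ) ^ t')^2 := by rw [Real.sin_sq_add_cos_sq, mul_one]
  have hsq : ((2:ℝ) ^ (t - (n:ℝ)))^2 = ((2:ℝ) ^ t')^2 := by
    rw [← l1, e1, e2, l2]
  have heq : (2:ℝ) ^ (t - (n:ℝ)) = (2:ℝ) ^ t' := by
    rw [← Real.sqrt_sq hu.le, hsq, Real.sqrt_sq hu'.le]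
  have ht : t - (n:ℝ) = t' := by
    have := congrArg (Real.logb 2) heq
    rwa [Real.logb_rpow two_pos (by norm_num), Real.logb_rpow two_pos (by norm_num)] at this
  have hcos : Real.cos (2 * π * s) = Real.cos (2 * π * s') := by
    rw [heq] at e1
    exact mul_left_cancel₀ hu'.ne' e1
  have hsin : Real.sin (2 * π * s) = Real.sin (2 * π * s') := by
    rw [heq] at e2
    exact mul_left_cancel₀ hu'.ne' e2
  obtain ⟨k, hk⟩ := Real.Angle.angle_eq_iff_two_pi_dvd_sub.mp
    (Real.Angle.cos_sin_inj hcos hsin)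
  have hs : s - s' = (k : ℝ) := by
    apply mul_left_cancel₀ two_pi_ne_zero
    calc 2 * π * (s - s') = 2 * π * s - 2 * π * s' := by ring
    _ = 2 * π * k := hk
    _ = 2 * π * (k:ℝ) := by norm_num
  constructor
  · rw [QuotientAddGroup.eq]
    exact ⟨-k, by simp only [zsmul_eq_mul, mul_one]; push_cast; linarith⟩
  · rw [QuotientAddGroup.eq]
    exact ⟨-n, by simp only [zsmul_eq_mul, mul_one]; push_cast; linarith⟩

lemma torusParam_inj : Function.Injective torusParam := by
  rintro ⟨a, b⟩ ⟨c, d⟩ h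
  obtain ⟨s, rfl⟩ := QuotientAddGroup.mk_surjective a
  obtain ⟨t, rfl⟩ := QuotientAddGroup.mk_surjective b
  obtain ⟨s', rfl⟩ := QuotientAddGroup.mk_surjective c
  obtain ⟨t', rfl⟩ := QuotientAddGroup.mk_surjective d
  rw [torusParam_mk, torusParam_mk] at h
  obtain ⟨h1, h2⟩ := torusParam_inj_aux h
  rw [Prod.mk.injEq]
  exact ⟨h1, h2⟩

lemma torusParam_surj :
    ∀ q ∈ Quot.mk homothetyRel '' puncturedPlane, ∃ ab, torusParam ab = q := by
  rintro q ⟨x, hx, rfl⟩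
  have hx0 : (x : EuclideanSpace ℝ (Fin 3)) 0 = 0 := hx
  set z : ℂ := ⟨(x : EuclideanSpace ℝ (Fin 3)) 1, (x : EuclideanSpace ℝ (Fin 3)) 2⟩ with hz_def
  have hz : z ≠ 0 := by
    intro h0
    apply x.2
    ext i
    have hre := congrArg Complex.re h0
    have him := congrArg Complex.im h0
    simp only [hz_def, Complex.zero_re, Complex.zero_im] at hre him
    fin_cases i
    · exact hx0
    · exact hre
    · exact him
  have habs : (0:ℝ) < ‖z‖ := norm_pos_iff.mpr hz
  set s := z.arg / (2 * π) with hs_def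
  set t := Real.logb 2 ‖z‖ with ht_def
  refine ⟨((s : AddCircle (1:ℝ)), (t : AddCircle (1:ℝ))), ?_⟩
  rw [torusParam_mk]
  unfold bigF
  congr 1
  apply Subtype.ext
  have hangle : 2 * π * s = z.arg := by
    rw [hs_def]
    field_simp
  have hpow : (2:ℝ) ^ t = ‖z‖ := Real.rpow_logb two_pos (by norm_num) habs
  ext i
  fin_cases i
  · simpa [planePtX, planePt] using hx0.symm
  · simp only [planePtX, planePt, Matrix.cons_val_one, Matrix.head_cons]
    rw [hangle, hpow, Complex.cos_arg hz]
    field_simp [hz_def]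
    rfl
  · simp only [planePtX, planePt, Matrix.cons_val_two, Matrix.tail_cons, Matrix.head_cons]
    rw [hangle, hpow, Complex.sin_arg]
    field_simp [hz_def]
    rfl

theorem image_of_punctured_plane_homeomorphic_to_torus' :
    Nonempty ((Quot.mk homothetyRel '' puncturedPlane) ≃ₜ
      (AddCircle (1 : ℝ) × AddCircle (1 : ℝ))) := by
  let f : AddCircle (1:ℝ) × AddCircle (1:ℝ) → (Quot.mk homothetyRel '' puncturedPlane) :=
    fun ab => ⟨torusParam ab, torusParam_mem ab⟩
  have hbij : Function.Bijective f := by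
    constructor
    · intro a b h
      exact torusParam_inj (congrArg Subtype.val h)
    · rintro ⟨q, hq⟩
      obtain ⟨ab, hab⟩ := torusParam_surj q hq
      exact ⟨ab, Subtype.ext hab⟩
  have hcont : Continuous f := continuous_torusParam.subtype_mk _
  exact ⟨(Continuous.homeoOfEquivCompactToT2 (f := Equiv.ofBijective f hbij) hcont).symm⟩

end AuxTorus

/-- The image under the quotient map of the punctured coordinate plane
`{(0, x₂, x₃) : (x₂, x₃) ≠ (0,0)}`, with the subspace topology in `V`, is homeomorphic
to the 2-torus `(ℝ/ℤ) × (ℝ/ℤ)` (the trivial torus `λ̂₀` in `V ≅ S² × S¹`). -/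
theorem image_of_punctured_plane_homeomorphic_to_torus :
    Nonempty ((Quot.mk homothetyRel '' puncturedPlane) ≃ₜ
      (AddCircle (1 : ℝ) × AddCircle (1 : ℝ))) := by
  exact image_of_punctured_plane_homeomorphic_to_torus'
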